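/- For the weight module M(g,h;ℤᵏ) with basis {v_β} and action L_α v_β = (g+β+hα)v_{α+β}, W_α v_β = 0, C v_β = 0: if g ∉ ℤᵏ or h ∉ {0,1}, then M(g,h;ℤᵏ) is a simple W[ℤᵏ]-module. -/

import Mathlib

/-- The action of `L_α` on the weight module `M(g,h;ℤᵏ)` (basis `v_β = single β 1`):
`L_α · v_β = (g + β + hα) v_{α+β}`; the elements `W_α` and `C` act as zero. -/
noncomputable def Lact (k : ℕ) (ε : (Fin k → ℤ) →+ ℂ) (g h : ℂ) (α : Fin k → ℤ) :
    ((Fin k → ℤ) →₀ ℂ) →ₗ[ℂ] ((Fin k → ℤ) →₀ ℂ) :=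
  Finsupp.lsum ℂ fun β =>
    LinearMap.toSpanSingleton ℂ _ ((g + ε β + h * ε α) • Finsupp.single (α + β) (1 : ℂ))

lemma Lact_single (k : ℕ) (ε : (Fin k → ℤ) →+ ℂ) (g h : ℂ) (α β : Fin k → ℤ) :
    Lact k ε g h α (Finsupp.single β 1) =
      (g + ε β + h * ε α) • Finsupp.single (α + β) (1 : ℂ) := by
  simp [Lact]

lemma Lact_zero_apply (k : ℕ) (ε : (Fin k → ℤ) →+ ℂ) (g h : ℂ) (v : (Fin k → ℤ) →₀ ℂ)
    (γ : Fin k → ℤ) : Lact k ε g h 0 v γ = (g + ε γ) * v γ := by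
  induction v using Finsupp.induction_linear with
  | zero => simp
  | add f g hf hg => simp [map_add, hf, hg]; ring
  | single β x =>
      simp [Lact, Finsupp.single_apply]
      by_cases hb : β = γ <;> simp [hb] <;> ring

/-- if `g ∉ ℤᵏ` (as a subgroup of `ℂ` via the injective embedding `ε`)
or `h ∉ {0,1}`, then `M(g,h;ℤᵏ)` is a simple module over the high rank `W`-algebra
`W(2,2)`: every subspace invariant under all `L_α` (and trivially under `W_α` and `C`,
which act as zero) is `⊥` or `⊤`. -/
theorem stmt12 (k : ℕ) (hk : 0 < k) (ε : (Fin k → ℤ) →+ ℂ)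
    (hε : Function.Injective ε) (g h : ℂ)
    (hgh : (¬ ∃ β : Fin k → ℤ, g = ε β) ∨ (h ≠ 0 ∧ h ≠ 1)) :
    ∀ N : Submodule ℂ ((Fin k → ℤ) →₀ ℂ),
      (∀ (α : Fin k → ℤ), ∀ v ∈ N, Lact k ε g h α v ∈ N) → N = ⊥ ∨ N = ⊤ := by
  intro N hN
  by_cases hbot : N = ⊥
  · exact Or.inl hbot
  right
  -- step lemma: move from one basis vector to another when the coefficient is nonzero
  have hstep : ∀ β γ : Fin k → ℤ, Finsupp.single β (1 : ℂ) ∈ N →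
      g + ε β + h * ε (γ - β) ≠ 0 → Finsupp.single γ (1 : ℂ) ∈ N := by
    intro β γ hβ hc
    have h1 := hN (γ - β) _ hβ
    rw [Lact_single] at h1
    have h2 : (γ - β) + β = γ := by abel
    rw [h2] at h1
    have h3 := N.smul_mem (g + ε β + h * ε (γ - β))⁻¹ h1
    rwa [smul_smul, inv_mul_cancel₀ hc, one_smul] at h3
  -- extraction of a basis vector from a nonzero element of N
  have extract : ∀ n : ℕ, ∀ v : (Fin k → ℤ) →₀ ℂ, v ∈ N → v ≠ 0 →
      v.support.card ≤ n → ∃ β, Finsupp.single β (1 : ℂ) ∈ N := by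
    intro n
    induction n with
    | zero =>
        intro v _ hv hcard
        exact absurd (Finsupp.support_eq_empty.mp (Finset.card_eq_zero.mp
          (Nat.le_zero.mp hcard))) hv
    | succ n ih =>
        intro v hvN hv hcard
        obtain ⟨β₁, hβ₁⟩ := Finsupp.support_nonempty_iff.mpr hv
        by_cases hone : v.support = {β₁}
        · refine ⟨β₁, ?_⟩
          obtain ⟨hne, hv1⟩ := Finsupp.support_eq_singleton.mp hone
          set c := v β₁ with hcdef
          have heq : Finsupp.single β₁ (1 : ℂ) = c⁻¹ • v := by
            rw [hv1, Finsupp.smul_single, smul_eq_mul, inv_mul_cancel₀ hne]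
          rw [heq]
          exact N.smul_mem _ hvN
        · -- there is another support element; kill β₁ with (L₀ - (g+εβ₁))
          obtain ⟨β₀, hβ₀, hβ₀ne⟩ : ∃ β₀ ∈ v.support, β₀ ≠ β₁ := by
            by_contra hcon
            push_neg at hcon
            exact hone (Finset.eq_singleton_iff_unique_mem.mpr ⟨hβ₁, hcon⟩)
          set w : (Fin k → ℤ) →₀ ℂ := Lact k ε g h 0 v - (g + ε β₁) • v with hw
          have hwN : w ∈ N := N.sub_mem (hN 0 v hvN) (N.smul_mem _ hvN)
          have hwapp : ∀ γ, w γ = (ε γ - ε β₁) * v γ := by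
            intro γ
            rw [hw]
            simp [Lact_zero_apply]
            ring
          have hwβ₀ : w β₀ ≠ 0 := by
            rw [hwapp]
            exact mul_ne_zero (sub_ne_zero_of_ne fun hc => hβ₀ne (hε hc))
              (Finsupp.mem_support_iff.mp hβ₀)
          have hwne : w ≠ 0 := fun hc => hwβ₀ (by rw [hc]; rfl)
          have hsub : w.support ⊆ v.support.erase β₁ := by
            intro γ hγ
            rw [Finsupp.mem_support_iff, hwapp] at hγ
            refine Finset.mem_erase.mpr ⟨?_, Finsupp.mem_support_iff.mpr ?_⟩
            · intro hcon; subst hcon; simp at hγ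
            · exact fun hcon => hγ (by rw [hcon, mul_zero])
          have hcard' : w.support.card ≤ n := by
            have h1 : (v.support.erase β₁).card = v.support.card - 1 :=
              Finset.card_erase_of_mem hβ₁
            have h2 := Finset.card_le_card hsub
            omega
          exact ih w hwN hwne hcard'
  obtain ⟨v, hvN, hvne⟩ := (Submodule.ne_bot_iff N).mp hbot
  obtain ⟨β, hβN⟩ := extract v.support.card v hvN hvne le_rfl
  -- from one basis vector to all of them
  have hall : ∀ γ, Finsupp.single γ (1 : ℂ) ∈ N := by
    intro γ
    by_cases hc : g + ε β + h * ε (γ - β) = 0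
    · -- the direct step fails, hence h ∉ {0,1}; go through an intermediate δ
      have hh0 : h ≠ 0 := by
        intro h0
        rcases hgh with hg | hh
        · exact hg ⟨-β, by rw [map_neg]; linear_combination hc - ε (γ - β) * h0⟩
        · exact hh.1 h0
      have hh1 : h ≠ 1 := by
        intro h1
        rcases hgh with hg | hh
        · refine hg ⟨-γ, ?_⟩
          have hc' := hc
          rw [map_sub] at hc'
          rw [map_neg]
          linear_combination hc' - (ε γ - ε β) * h1
        · exact hh.2 h1
      haveI : Nonempty (Fin k) := ⟨⟨0, hk⟩⟩
      obtain ⟨δ, hδ⟩ := ({β, γ} : Finset (Fin k → ℤ)).exists_notMem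
      simp only [Finset.mem_insert, Finset.mem_singleton, not_or] at hδ
      obtain ⟨hδβ, hδγ⟩ := hδ
      have hc1 : g + ε β + h * ε (δ - β) ≠ 0 := by
        intro hc1
        have h2 : h * (ε (δ - β) - ε (γ - β)) = 0 := by linear_combination hc1 - hc
        rcases mul_eq_zero.mp h2 with h3 | h3
        · exact hh0 h3
        · exact hδγ (sub_left_inj.mp (hε (sub_eq_zero.mp h3)))
      have hδN := hstep β δ hβN hc1
      have hc2 : g + ε δ + h * ε (γ - δ) ≠ 0 := by
        intro hc2
        have hc' := hc
        rw [map_sub] at hc' hc2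
        have h2 : (1 - h) * (ε δ - ε β) = 0 := by linear_combination hc2 - hc'
        rcases mul_eq_zero.mp h2 with h3 | h3
        · exact hh1 (by linear_combination -h3)
        · exact hδβ (hε (sub_eq_zero.mp h3))
      exact hstep δ γ hδN hc2
    · exact hstep β γ hβN hc
  -- conclude N = ⊤
  rw [Submodule.eq_top_iff']
  intro u
  rw [← Finsupp.sum_single u]
  refine N.sum_mem fun γ _ => ?_
  have heq : Finsupp.single γ (u γ) = u γ • Finsupp.single γ (1 : ℂ) := by
    rw [Finsupp.smul_single, smul_eq_mul, mul_one]
  rw [heq]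
  exact N.smul_mem _ (hall γ)
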